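/- Let μ², λ, λ₁, …, λ₇, κ, β, v, ξ be real parameters with v > 0, m² := −2μ² + κv² + βv⁴ > 0, set m := √(−2μ² + κv² + βv⁴), assume κ + 2βv² ≠ 0, and let A ∈ ℝ satisfy A² = [8(2μ² − κv² − βv⁴) − 4λv²ξ² + 4λv⁴]/(κ + 2βv²). Suppose the three algebraic conditions hold: (λ₃ + 6λ₄ + 36λ₅)A⁴ − (48λ₆ + 8λ₇)v²A² + 48βv⁴ = 0; 12m² + (6λ₁ + λ₂)A² − 6κv² + (6λ₆ + λ₇)v²A² − 12βv⁴ = 0; and 72λv⁴ + (6λ₆ + λ₇)A⁴ − 24βv²A² = 0. Then φ(y) = v·tanh(my) and χ(y) = A·sech(my) satisfy, for all y ∈ ℝ, the coupled system φ''(y) = λφ(φ² − v²)(φ² − ξ²) + (λ/2)φ(φ² − v²)² + (κ/4)φχ² + ((6λ₆ + λ₇)/48)φχ⁴ + (β/2)φ³χ² and χ''(y) = −2μ²χ + (λ₁ + λ₂/6)χ³ + ((λ₃ + 6λ₄ + 36λ₅)/48)χ⁵ + κφ²χ + ((6λ₆ + λ₇)/6)φ²χ³ + βφ⁴χ. -/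

import Mathlib

private lemma alg_aux (μ2 lam l1 l2 l3 l4 l5 l6 l7 κ β v ξ m A t s : ℝ)
    (hm2 : m ^ 2 = -2 * μ2 + κ * v ^ 2 + β * v ^ 4)
    (hA' : (κ + 2 * β * v ^ 2) * A ^ 2 = 8 * (2 * μ2 - κ * v ^ 2 - β * v ^ 4)
      - 4 * lam * v ^ 2 * ξ ^ 2 + 4 * lam * v ^ 4)
    (hcond1 : (l3 + 6 * l4 + 36 * l5) * A ^ 4 - (48 * l6 + 8 * l7) * v ^ 2 * A ^ 2
      + 48 * β * v ^ 4 = 0)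
    (hcond2 : 12 * m ^ 2 + (6 * l1 + l2) * A ^ 2 - 6 * κ * v ^ 2
      + (6 * l6 + l7) * v ^ 2 * A ^ 2 - 12 * β * v ^ 4 = 0)
    (hcond3 : 72 * lam * v ^ 4 + (6 * l6 + l7) * A ^ 4 - 24 * β * v ^ 2 * A ^ 2 = 0)
    (hts : s ^ 2 + t ^ 2 = 1) :
    (-2 * v * m ^ 2 * t * s ^ 2
        = lam * (v * t) * ((v * t) ^ 2 - v ^ 2) * ((v * t) ^ 2 - ξ ^ 2)
          + (lam / 2) * (v * t) * ((v * t) ^ 2 - v ^ 2) ^ 2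
          + (κ / 4) * (v * t) * (A * s) ^ 2
          + ((6 * l6 + l7) / 48) * (v * t) * (A * s) ^ 4
          + (β / 2) * (v * t) ^ 3 * (A * s) ^ 2) ∧
    (A * m ^ 2 * s * (1 - 2 * s ^ 2)
        = -2 * μ2 * (A * s) + (l1 + l2 / 6) * (A * s) ^ 3
          + ((l3 + 6 * l4 + 36 * l5) / 48) * (A * s) ^ 5
          + κ * (v * t) ^ 2 * (A * s)
          + ((6 * l6 + l7) / 6) * (v * t) ^ 2 * (A * s) ^ 3
          + β * (v * t) ^ 4 * (A * s)) := by
  constructor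
  · linear_combination (-(1/4) * v * t * s ^ 2) * hA' + (-2 * v * t * s ^ 2) * hm2
      + (-(1/48) * v * t * s ^ 4) * hcond3
      + (lam * t * v ^ 3 * ξ ^ 2 + (1/2) * lam * t * v ^ 5 + (3/2) * lam * t * s ^ 2 * v ^ 5
        - (1/2) * β * t * s ^ 2 * A ^ 2 * v ^ 3 - (3/2) * lam * t ^ 3 * v ^ 5) * hts
  · linear_combination (A * s) * hm2 + (-(1/6) * A * s ^ 3) * hcond2
      + (-(1/48) * A * s ^ 5) * hcond1
      + (-(κ * s * A * v ^ 2) - β * s * A * v ^ 4 + β * s ^ 3 * A * v ^ 4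
        - (1/6) * l7 * s ^ 3 * A ^ 3 * v ^ 2 - l6 * s ^ 3 * A ^ 3 * v ^ 2
        - β * t ^ 2 * s * A * v ^ 4) * hts

/-- The sixth-order-potential domain-wall background of the
SO(10) → SU(3)×SU(2)_L×SU(2)_R×U(1)_{B−L} model:
`φ(y) = v·tanh(my)`, `χ(y) = A·sech(my)` solve the static Euler–Lagrange equations. -/
theorem sixth_order_domain_wall_solution
    (μ2 lam l1 l2 l3 l4 l5 l6 l7 κ β v ξ : ℝ)
    (hv : 0 < v)
    (hmass : 0 < -2 * μ2 + κ * v ^ 2 + β * v ^ 4)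
    (m A : ℝ)
    (hm : m = Real.sqrt (-2 * μ2 + κ * v ^ 2 + β * v ^ 4))
    (hden : κ + 2 * β * v ^ 2 ≠ 0)
    (hA : A ^ 2 = (8 * (2 * μ2 - κ * v ^ 2 - β * v ^ 4) - 4 * lam * v ^ 2 * ξ ^ 2
      + 4 * lam * v ^ 4) / (κ + 2 * β * v ^ 2))
    (hcond1 : (l3 + 6 * l4 + 36 * l5) * A ^ 4 - (48 * l6 + 8 * l7) * v ^ 2 * A ^ 2
      + 48 * β * v ^ 4 = 0)
    (hcond2 : 12 * m ^ 2 + (6 * l1 + l2) * A ^ 2 - 6 * κ * v ^ 2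
      + (6 * l6 + l7) * v ^ 2 * A ^ 2 - 12 * β * v ^ 4 = 0)
    (hcond3 : 72 * lam * v ^ 4 + (6 * l6 + l7) * A ^ 4 - 24 * β * v ^ 2 * A ^ 2 = 0)
    (φ χ : ℝ → ℝ)
    (hφ : ∀ y, φ y = v * Real.tanh (m * y))
    (hχ : ∀ y, χ y = A / Real.cosh (m * y)) :
    ∀ y : ℝ,
      deriv (deriv φ) y
        = lam * φ y * ((φ y) ^ 2 - v ^ 2) * ((φ y) ^ 2 - ξ ^ 2)
          + (lam / 2) * φ y * ((φ y) ^ 2 - v ^ 2) ^ 2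
          + (κ / 4) * φ y * (χ y) ^ 2
          + ((6 * l6 + l7) / 48) * φ y * (χ y) ^ 4
          + (β / 2) * (φ y) ^ 3 * (χ y) ^ 2 ∧
      deriv (deriv χ) y
        = -2 * μ2 * χ y + (l1 + l2 / 6) * (χ y) ^ 3
          + ((l3 + 6 * l4 + 36 * l5) / 48) * (χ y) ^ 5
          + κ * (φ y) ^ 2 * χ y
          + ((6 * l6 + l7) / 6) * (φ y) ^ 2 * (χ y) ^ 3
          + β * (φ y) ^ 4 * χ y := by
  have hm2 : m ^ 2 = -2 * μ2 + κ * v ^ 2 + β * v ^ 4 := by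
    rw [hm, Real.sq_sqrt hmass.le]
  have hA' : (κ + 2 * β * v ^ 2) * A ^ 2 = 8 * (2 * μ2 - κ * v ^ 2 - β * v ^ 4)
      - 4 * lam * v ^ 2 * ξ ^ 2 + 4 * lam * v ^ 4 := by
    rw [hA]; field_simp
  -- derivatives of cosh(m·) and sinh(m·)
  have hcosh : ∀ x : ℝ, HasDerivAt (fun z => Real.cosh (m * z)) (m * Real.sinh (m * x)) x := by
    intro x
    have h := (Real.hasDerivAt_cosh (m * x)).comp x ((hasDerivAt_id x).const_mul m)
    exact h.congr_deriv (by simp only [id, mul_one]; ring)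
  have hsinh : ∀ x : ℝ, HasDerivAt (fun z => Real.sinh (m * z)) (m * Real.cosh (m * x)) x := by
    intro x
    have h := (Real.hasDerivAt_sinh (m * x)).comp x ((hasDerivAt_id x).const_mul m)
    exact h.congr_deriv (by simp only [id, mul_one]; ring)
  have hcne : ∀ x : ℝ, Real.cosh (m * x) ≠ 0 := fun x => (Real.cosh_pos (m * x)).ne'
  have hpyth : ∀ x : ℝ, Real.cosh (m * x) ^ 2 - Real.sinh (m * x) ^ 2 = 1 :=
    fun x => Real.cosh_sq_sub_sinh_sq (m * x)
  -- first derivative of φ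
  have hφfun : φ = fun z => v * (Real.sinh (m * z) / Real.cosh (m * z)) := by
    funext z; rw [hφ z, Real.tanh_eq_sinh_div_cosh]
  have dφ1 : deriv φ = fun x => v * m / Real.cosh (m * x) ^ 2 := by
    funext x
    have h : HasDerivAt φ (v * m / Real.cosh (m * x) ^ 2) x := by
      rw [hφfun]
      have h0 := (((hsinh x).div (hcosh x) (hcne x)).const_mul v)
      refine h0.congr_deriv ?_
      have h1 : m * Real.cosh (m * x) * Real.cosh (m * x)
          - Real.sinh (m * x) * (m * Real.sinh (m * x)) = m := by
        linear_combination m * hpyth x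
      rw [h1]
      ring
    exact h.deriv
  -- first derivative of χ
  have hχfun : χ = fun z => A / Real.cosh (m * z) := funext hχ
  have dχ1 : deriv χ = fun x => -(A * m * Real.sinh (m * x)) / Real.cosh (m * x) ^ 2 := by
    funext x
    have h : HasDerivAt χ (-(A * m * Real.sinh (m * x)) / Real.cosh (m * x) ^ 2) x := by
      rw [hχfun]
      have h0 := (hasDerivAt_const x A).div (hcosh x) (hcne x)
      refine h0.congr_deriv ?_
      ring
    exact h.deriv
  intro y
  set c := Real.cosh (m * y) with hcdef
  set sh := Real.sinh (m * y) with hshdef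
  have hc : c ≠ 0 := hcne y
  have hpy : c ^ 2 - sh ^ 2 = 1 := hpyth y
  have hpow : HasDerivAt (fun x => Real.cosh (m * x) ^ 2)
      ((2 : ℕ) * c ^ 1 * (m * sh)) y := (hcosh y).pow 2
  -- second derivative of φ
  have dφ2 : deriv (deriv φ) y = -2 * v * m ^ 2 * sh / c ^ 3 := by
    rw [dφ1]
    have h : HasDerivAt (fun x => v * m / Real.cosh (m * x) ^ 2)
        (-2 * v * m ^ 2 * sh / c ^ 3) y := by
      have h0 := (hasDerivAt_const y (v * m)).div hpow (pow_ne_zero 2 hc)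
      refine h0.congr_deriv ?_
      field_simp
      ring
    exact h.deriv
  -- second derivative of χ
  have dχ2 : deriv (deriv χ) y = A * m ^ 2 * (2 * sh ^ 2 - c ^ 2) / c ^ 3 := by
    rw [dχ1]
    have h : HasDerivAt (fun x => -(A * m * Real.sinh (m * x)) / Real.cosh (m * x) ^ 2)
        (A * m ^ 2 * (2 * sh ^ 2 - c ^ 2) / c ^ 3) y := by
      have hnum : HasDerivAt (fun x => -(A * m * Real.sinh (m * x)))
          (-(A * m * (m * Real.cosh (m * y)))) y := ((hsinh y).const_mul (A * m)).neg
      have h0 := hnum.div hpow (pow_ne_zero 2 hc)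
      refine h0.congr_deriv ?_
      field_simp
      ring
    exact h.deriv
  -- reduce to algebra
  have hts : (1 / c) ^ 2 + Real.tanh (m * y) ^ 2 = 1 := by
    rw [Real.tanh_eq_sinh_div_cosh]
    field_simp
    linear_combination (-Real.cosh (m * y) ^ 2) * hpyth y
  obtain ⟨e1, e2⟩ := alg_aux μ2 lam l1 l2 l3 l4 l5 l6 l7 κ β v ξ m A
    (Real.tanh (m * y)) (1 / c) hm2 hA' hcond1 hcond2 hcond3 hts
  have hφy : φ y = v * Real.tanh (m * y) := hφ y
  have hχy : χ y = A * (1 / c) := by rw [hχ y]; ring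
  have hd1 : deriv (deriv φ) y = -2 * v * m ^ 2 * Real.tanh (m * y) * (1 / c) ^ 2 := by
    rw [dφ2, Real.tanh_eq_sinh_div_cosh]
    ring
  have hd2 : deriv (deriv χ) y = A * m ^ 2 * (1 / c) * (1 - 2 * (1 / c) ^ 2) := by
    have h2sh : 2 * sh ^ 2 - c ^ 2 = c ^ 2 - 2 := by linarith [hpy]
    rw [dχ2, h2sh]
    field_simp
  rw [hd1, hd2, hφy, hχy]
  exact ⟨e1, e2⟩
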